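/- There exists a universal constant C > 0 such that the following holds. Let β ≥ 1 and let d be any metric on the unit square [0,1]² satisfying ‖x − y‖ ≤ d(x, y) ≤ β‖x − y‖ for all x, y ∈ [0,1]², where ‖·‖ denotes the Euclidean norm. Let m ≥ 1 be an integer, let p₁, …, p_m be independent random points, each uniformly distributed on [0,1]², and let S = {p₁, …, p_m}. Let □ ⊆ [0,1]² be any axis-parallel square of side length 1/√m. Then the expected number of indices i ∈ {1, …, m} such that the Voronoi cell of p_i with respect to S in the metric d intersects □ is at most C·β⁵. -/

import Mathlib

open MeasureTheory ProbabilityTheory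
open scoped ENNReal NNReal

noncomputable section

/-- The unit square `[0,1]² ⊆ ℝ²` (with the Euclidean metric). -/
def unitSquare : Set (EuclideanSpace ℝ (Fin 2)) := {x | ∀ i, x i ∈ Set.Icc (0 : ℝ) 1}

/-- The axis-parallel square with south-west corner `c` and side length `s`. -/
def axisSquare (c : EuclideanSpace ℝ (Fin 2)) (s : ℝ) : Set (EuclideanSpace ℝ (Fin 2)) :=
  {x | ∀ i, x i ∈ Set.Icc (c i) (c i + s)}

/-- The Voronoi cell of `p` with respect to the finite set of sites `P` inside the
unit square, for the distance function `d` on the unit square. -/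
def vorCellD (d : EuclideanSpace ℝ (Fin 2) → EuclideanSpace ℝ (Fin 2) → ℝ)
    (P : Finset (EuclideanSpace ℝ (Fin 2))) (p : EuclideanSpace ℝ (Fin 2)) :
    Set (EuclideanSpace ℝ (Fin 2)) :=
  {x ∈ unitSquare | ∀ q ∈ P, d x p ≤ d x q}

namespace VorAux

abbrev E2 := EuclideanSpace ℝ (Fin 2)

def boxSet (a b : Fin 2 → ℝ) : Set E2 := {x | ∀ i, x i ∈ Set.Icc (a i) (b i)}

lemma measurable_coord (i : Fin 2) : Measurable (fun x : E2 => x i) :=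
  (EuclideanSpace.proj (𝕜 := ℝ) i).continuous.measurable

lemma measurableSet_boxSet (a b : Fin 2 → ℝ) : MeasurableSet (boxSet a b) := by
  have : boxSet a b = ⋂ i, (fun x : E2 => x i) ⁻¹' Set.Icc (a i) (b i) := by
    ext x; simp [boxSet, Set.mem_iInter]
  rw [this]
  exact MeasurableSet.iInter fun i => (measurable_coord i) measurableSet_Icc

lemma volume_boxSet (a b : Fin 2 → ℝ) :
    volume (boxSet a b) = ∏ i, ENNReal.ofReal (b i - a i) := by
  have h : boxSet a b
      = (MeasurableEquiv.toLp 2 (Fin 2 → ℝ)).symm ⁻¹' (Set.univ.pi fun i => Set.Icc (a i) (b i)) := by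
    ext x
    simp only [boxSet, Set.mem_setOf_eq, Set.mem_preimage, Set.mem_univ_pi]
    rfl
  rw [h, (EuclideanSpace.volume_preserving_symm_measurableEquiv_toLp (Fin 2)).measure_preimage
    (MeasurableSet.univ_pi (fun i => measurableSet_Icc)).nullMeasurableSet,
    volume_pi_pi]
  simp [Real.volume_Icc]

lemma coord_abs_le_dist (x y : E2) (i : Fin 2) : |x i - y i| ≤ dist x y := by
  rw [EuclideanSpace.dist_eq, ← Real.sqrt_sq_eq_abs]
  apply Real.sqrt_le_sqrt
  calc (x i - y i)^2 = dist (x i) (y i) ^ 2 := by rw [Real.dist_eq, sq_abs]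
  _ ≤ ∑ j, dist (x j) (y j) ^ 2 :=
      Finset.single_le_sum (f := fun j => dist (x j) (y j) ^ 2)
        (fun j _ => sq_nonneg _) (Finset.mem_univ i)

lemma dist_le_of_coord {x y : E2} {r : ℝ} (h : ∀ i, |x i - y i| ≤ r) : dist x y ≤ 2 * r := by
  have hr : 0 ≤ r := le_trans (abs_nonneg _) (h 0)
  rw [EuclideanSpace.dist_eq]
  have hsum : ∑ i, dist (x i) (y i) ^ 2 ≤ (2*r)^2 := by
    have h1 : ∀ i ∈ Finset.univ, dist (x i) (y i)^2 ≤ r^2 := fun i _ => by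
      rw [Real.dist_eq]
      exact pow_le_pow_left₀ (abs_nonneg _) (h i) 2
    calc ∑ i, dist (x i) (y i)^2 ≤ ∑ _i : Fin 2, r^2 := Finset.sum_le_sum h1
    _ = 2 * r^2 := by simp [Finset.sum_const]
    _ ≤ (2*r)^2 := by nlinarith
  calc Real.sqrt (∑ i, dist (x i) (y i)^2) ≤ Real.sqrt ((2*r)^2) := Real.sqrt_le_sqrt hsum
  _ = 2*r := Real.sqrt_sq (by linarith)

lemma measurableSet_unitSquare : MeasurableSet unitSquare := by
  have : unitSquare = boxSet (fun _ => 0) (fun _ => 1) := rfl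
  rw [this]; exact measurableSet_boxSet _ _

lemma volume_unitSquare : volume unitSquare = 1 := by
  have : unitSquare = boxSet (fun _ => 0) (fun _ => 1) := rfl
  rw [this, volume_boxSet]
  simp

lemma dist_le_two_of_mem {x y : E2} (hx : x ∈ unitSquare) (hy : y ∈ unitSquare) :
    dist x y ≤ 2 := by
  have h : ∀ i, |x i - y i| ≤ 1 := by
    intro i
    have h1 := hx i; have h2 := hy i
    rw [abs_le]
    constructor <;> [linarith [h1.1, h2.2]; linarith [h1.2, h2.1]]
  simpa using dist_le_of_coord h

lemma volume_boxSet_const (a : Fin 2 → ℝ) (t : ℝ) (ht : 0 ≤ t) :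
    volume (boxSet a (fun i => a i + t)) = ENNReal.ofReal (t^2) := by
  rw [volume_boxSet]
  simp only [add_sub_cancel_left]
  rw [Finset.prod_const, Finset.card_univ, Fintype.card_fin, ← ENNReal.ofReal_pow ht]

end VorAux

open VorAux

set_option maxHeartbeats 1000000 in
open Classical in
/-- There is a universal constant `C > 0` such that the following holds.  Let `β ≥ 1`
and let `d` be any metric on the unit square that is within a factor `β` of the
Euclidean distance.  For `m ≥ 1` i.i.d. uniform points on the unit square, the
expected number of sites whose Voronoi cell in the metric `d` meets a fixed
axis-parallel sub-square of side length `1/√m` is at most `C·β⁵`. -/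
theorem expected_cells_meeting_square_terrain :
    ∃ C : ℝ, 0 < C ∧
      ∀ (β : ℝ), 1 ≤ β →
      ∀ (d : EuclideanSpace ℝ (Fin 2) → EuclideanSpace ℝ (Fin 2) → ℝ),
        (∀ x ∈ unitSquare, ∀ y ∈ unitSquare, d x y = d y x) →
        (∀ x ∈ unitSquare, ∀ y ∈ unitSquare, ∀ z ∈ unitSquare, d x z ≤ d x y + d y z) →
        (∀ x ∈ unitSquare, ∀ y ∈ unitSquare, dist x y ≤ d x y ∧ d x y ≤ β * dist x y) →
      ∀ (m : ℕ), 1 ≤ m →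
      ∀ (Ω : Type) (_ : MeasurableSpace Ω) (μ : Measure Ω), IsProbabilityMeasure μ →
      ∀ (p : Fin m → Ω → EuclideanSpace ℝ (Fin 2)),
        (∀ i, Measurable (p i)) →
        iIndepFun p μ →
        (∀ i, Measure.map (p i) μ = volume.restrict unitSquare) →
      ∀ c : EuclideanSpace ℝ (Fin 2),
        axisSquare c (1 / Real.sqrt m) ⊆ unitSquare →
        ∫⁻ ω, ((Finset.univ.filter (fun i : Fin m =>
            (vorCellD d (Finset.image (fun j => p j ω) Finset.univ) (p i ω) ∩
              axisSquare c (1 / Real.sqrt m)).Nonempty)).card : ℝ≥0∞) ∂μ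
          ≤ ENNReal.ofReal (C * β ^ 5) := by
  classical
  set ρ : ℝ := Real.exp (-(1/128 : ℝ)) with hρdef
  have hρ0 : 0 < ρ := Real.exp_pos _
  have hρ1 : ρ < 1 := by
    rw [hρdef]; exact Real.exp_lt_one_iff.mpr (by norm_num)
  have hsummable : Summable (fun k : ℕ => ((k:ℝ)+5)^2 * ρ^k) := by
    have heq : (fun k : ℕ => ((k:ℝ)+5)^2 * ρ^k)
        = fun k : ℕ => (k:ℝ)^2*ρ^k + 10*((k:ℝ)^1*ρ^k) + 25*ρ^k := by
      funext k; ring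
    rw [heq]
    have hρn : ‖ρ‖ < 1 := by rw [Real.norm_eq_abs, abs_of_pos hρ0]; exact hρ1
    exact ((summable_pow_mul_geometric_of_norm_lt_one 2 hρn).add
      ((summable_pow_mul_geometric_of_norm_lt_one 1 hρn).mul_left 10)).add
      ((summable_geometric_of_norm_lt_one hρn).mul_left 25)
  set S : ℝ := ∑' k : ℕ, ((k:ℝ)+5)^2 * ρ^k with hSdef
  have hS0 : 0 ≤ S := tsum_nonneg fun k => by positivity
  refine ⟨4*S + 1, by positivity, ?_⟩
  intro β hβ d _hsymm _htri hd m hm Ω mΩ μ hμ p hp hindep hlaw c hsub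
  have hβ0 : (0:ℝ) < β := lt_of_lt_of_le one_pos hβ
  have hβ5 : (1:ℝ) ≤ β^5 := one_le_pow₀ hβ
  have hCβ : (1:ℝ) ≤ (4*S+1) * β^5 := by nlinarith
  have hm0 : (0:ℝ) < m := by exact_mod_cast hm
  set s : ℝ := 1 / Real.sqrt m with hsdef
  have hsqrt : (0:ℝ) < Real.sqrt m := Real.sqrt_pos.mpr hm0
  have hs : 0 < s := by positivity
  have hms : (m:ℝ) * s^2 = 1 := by
    rw [hsdef]; rw [div_pow, one_pow, Real.sq_sqrt hm0.le]
    field_simp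
  have hUmeas : MeasurableSet unitSquare := measurableSet_unitSquare
  have hcU : c ∈ unitSquare := hsub (fun i => ⟨le_refl _, by linarith [hs.le]⟩)
  -- the law of each point gives: preimage measure = volume, for subsets of the square
  have hmeasmap : ∀ (j : Fin m) (A : Set E2), MeasurableSet A → A ⊆ unitSquare →
      μ (p j ⁻¹' A) = volume A := by
    intro j A hA hAU
    rw [← Measure.map_apply (hp j) hA, hlaw j, Measure.restrict_apply hA,
      Set.inter_eq_self_of_subset_left hAU]
  -- a.e., all the points lie in the unit square
  have hG : ∀ᵐ ω ∂μ, ∀ j, p j ω ∈ unitSquare := by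
    rw [MeasureTheory.ae_all_iff]
    intro j
    have h0 : μ (p j ⁻¹' unitSquareᶜ) = 0 := by
      rw [← Measure.map_apply (hp j) hUmeas.compl, hlaw j,
        Measure.restrict_apply hUmeas.compl]
      simp
    rw [MeasureTheory.ae_iff]
    exact h0
  set N : Ω → ℕ := fun ω => (Finset.univ.filter (fun i : Fin m =>
      (vorCellD d (Finset.image (fun j => p j ω) Finset.univ) (p i ω) ∩
        axisSquare c (1 / Real.sqrt m)).Nonempty)).card with hNdef
  show ∫⁻ ω, (N ω : ℝ≥0∞) ∂μ ≤ ENNReal.ofReal ((4*S+1) * β^5)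
  by_cases hm1 : m = 1
  · -- trivial case: only one point, so at most one cell
    have hcard : ∀ ω, ((N ω : ℝ≥0∞)) ≤ 1 := by
      intro ω
      have h1 : N ω ≤ (Finset.univ : Finset (Fin m)).card := Finset.card_filter_le _ _
      have h2 : (Finset.univ : Finset (Fin m)).card = 1 := by
        rw [Finset.card_univ, Fintype.card_fin, hm1]
      calc ((N ω : ℝ≥0∞)) ≤ ((1:ℕ) : ℝ≥0∞) := by
            exact_mod_cast Nat.cast_le.mpr (h2 ▸ h1)
      _ = 1 := by norm_num
    calc ∫⁻ ω, (N ω : ℝ≥0∞) ∂μ ≤ ∫⁻ _, 1 ∂μ := lintegral_mono (fun ω => hcard ω)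
    _ = 1 := by simp
    _ ≤ ENNReal.ofReal ((4*S+1) * β^5) := by
        rw [← ENNReal.ofReal_one]; exact ENNReal.ofReal_le_ofReal hCβ
  · have hm2 : 2 ≤ m := by omega
    have hm2' : (2:ℝ) ≤ m := by exact_mod_cast hm2
    set T : ℕ → Set E2 := fun k => unitSquare ∩ {x : E2 | (k:ℝ)*s ≤ dist x c} with hTdef
    set R : ℕ → Set E2 := fun k => unitSquare ∩ {x : E2 | dist x c ≤ β*((k:ℝ)+5)*s} with hRdef
    have hdistc : Continuous (fun x : E2 => dist x c) := continuous_id.dist continuous_const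
    have hTmeas : ∀ k, MeasurableSet (T k) := fun k =>
      hUmeas.inter (measurableSet_le measurable_const hdistc.measurable)
    have hRmeas : ∀ k, MeasurableSet (R k) := fun k =>
      hUmeas.inter (measurableSet_le hdistc.measurable measurable_const)
    have hvolR : ∀ k : ℕ, volume (R k) ≤ ENNReal.ofReal (4*β^2*((k:ℝ)+5)^2*s^2) := by
      intro k
      set r := β*((k:ℝ)+5)*s with hrdef
      have hr0 : 0 ≤ r := by positivity
      have hsubbox : R k ⊆ boxSet (fun i => c i - r) (fun i => (c i - r) + 2*r) := by
        intro x hx i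
        have h1 : |x i - c i| ≤ dist x c := coord_abs_le_dist x c i
        have h2 : dist x c ≤ r := hx.2
        have h3 : |x i - c i| ≤ r := h1.trans h2
        rw [abs_le] at h3
        exact ⟨show c i - r ≤ x i by linarith [h3.1],
          show x i ≤ (c i - r) + 2*r by linarith [h3.2]⟩
      calc volume (R k) ≤ volume (boxSet (fun i => c i - r) (fun i => (c i - r) + 2*r)) :=
            measure_mono hsubbox
      _ = ENNReal.ofReal ((2*r)^2) := volume_boxSet_const _ _ (by positivity)
      _ = ENNReal.ofReal (4*β^2*((k:ℝ)+5)^2*s^2) := by rw [hrdef]; congr 1; ring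
    have hvolT : ∀ k : ℕ, (k:ℝ)*s ≤ 2 → volume (T k) ≤ ENNReal.ofReal (1 - ((k:ℝ)*s)^2/64) := by
      intro k hk
      rcases Nat.eq_zero_or_pos k with hk0 | hkpos
      · subst hk0
        simp only [Nat.cast_zero, zero_mul]
        calc volume (T 0) ≤ volume unitSquare := measure_mono Set.inter_subset_left
        _ = 1 := volume_unitSquare
        _ = ENNReal.ofReal (1 - 0^2/64) := by norm_num
      · have hkpos' : (0:ℝ) < (k:ℝ)*s := by
          have : (1:ℝ) ≤ (k:ℝ) := by exact_mod_cast hkpos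
          nlinarith
        set u := min ((k:ℝ)*s) 1 with hudef
        have hu0 : 0 < u := lt_min hkpos' one_pos
        have hu1 : u ≤ 1 := min_le_right _ _
        have huks : (k:ℝ)*s ≤ 2*u := by
          by_cases hc : (k:ℝ)*s ≤ 1
          · rw [hudef, min_eq_left hc]; linarith
          · rw [hudef, min_eq_right (le_of_not_ge hc)]; linarith
        obtain ⟨Q, hQmeas, hQvol, hQU, hQd⟩ :
            ∃ Q : Set E2, MeasurableSet Q ∧ volume Q = ENNReal.ofReal ((u/4)^2) ∧
              Q ⊆ unitSquare ∧ ∀ x ∈ Q, dist x c ≤ u/2 := by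
          refine ⟨boxSet (fun i => if c i ≤ 1/2 then c i else c i - u/4)
            (fun i => (if c i ≤ 1/2 then c i else c i - u/4) + u/4),
            measurableSet_boxSet _ _, volume_boxSet_const _ _ (by positivity), ?_, ?_⟩
          · intro x hx i
            have hxi := hx i
            have hci := hcU i
            rw [Set.mem_Icc] at hxi ⊢
            by_cases hc : c i ≤ 1/2 <;> simp only [hc, if_true, if_false] at hxi <;>
              constructor <;> [skip; skip; skip; skip] <;>
              first
                | linarith [hxi.1, hxi.2, hci.1, hci.2]
          · intro x hx
            have hcoord : ∀ i, |x i - c i| ≤ u/4 := by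
              intro i
              have hxi := hx i
              rw [Set.mem_Icc] at hxi
              by_cases hc : c i ≤ 1/2 <;> simp only [hc, if_true, if_false] at hxi <;>
                rw [abs_le] <;> constructor <;> linarith [hxi.1, hxi.2]
            calc dist x c ≤ 2*(u/4) := dist_le_of_coord hcoord
            _ = u/2 := by ring
        have hTsub : T k ⊆ unitSquare \ Q := by
          intro x hx
          refine ⟨hx.1, fun hxQ => ?_⟩
          have h1 := hQd x hxQ
          have h2 : (k:ℝ)*s ≤ dist x c := hx.2
          have h3 : u ≤ (k:ℝ)*s := min_le_left _ _
          linarith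
        calc volume (T k) ≤ volume (unitSquare \ Q) := measure_mono hTsub
        _ = volume unitSquare - volume Q :=
            measure_diff hQU hQmeas.nullMeasurableSet (by rw [hQvol]; exact ENNReal.ofReal_ne_top)
        _ = 1 - ENNReal.ofReal ((u/4)^2) := by rw [volume_unitSquare, hQvol]
        _ = ENNReal.ofReal (1 - (u/4)^2) := by
            rw [ENNReal.ofReal_sub 1 (by positivity), ENNReal.ofReal_one]
        _ ≤ ENNReal.ofReal (1 - ((k:ℝ)*s)^2/64) := by
            apply ENNReal.ofReal_le_ofReal
            nlinarith [huks, hu0.le, hkpos'.le]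
    -- bad events
    set B : Fin m → ℕ → Set Ω := fun i k =>
      ⋂ j ∈ Finset.univ, p j ⁻¹' (if j = i then R k else T k) with hBdef
    have hBmeas : ∀ i k, MeasurableSet (B i k) := by
      intro i k
      apply MeasurableSet.biInter (Finset.univ : Finset (Fin m)).countable_toSet
      intro j _
      exact (hp j) (by split <;> [exact hRmeas k; exact hTmeas k])
    have hTsubU : ∀ k, T k ⊆ unitSquare := fun k => Set.inter_subset_left
    have hRsubU : ∀ k, R k ⊆ unitSquare := fun k => Set.inter_subset_left
    have hs2 : s^2 = 1/(m:ℝ) := by rw [eq_div_iff (ne_of_gt hm0)]; linarith [hms]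
    have hBbound : ∀ (i : Fin m) (k : ℕ),
        μ (B i k) ≤ ENNReal.ofReal (4*β^2*((k:ℝ)+5)^2*s^2 * ρ^k) := by
      intro i k
      by_cases hk2 : (k:ℝ)*s ≤ 2
      · have hfact := hindep.measure_inter_preimage_eq_mul Finset.univ
          (sets := fun j => if j = i then R k else T k)
          (fun j _ => by split <;> [exact hRmeas k; exact hTmeas k])
        have hμB : μ (B i k)
            = μ (p i ⁻¹' R k) * ∏ j ∈ Finset.univ.erase i, μ (p j ⁻¹' T k) := by
          rw [show B i k = ⋂ j ∈ Finset.univ, p j ⁻¹' (if j = i then R k else T k) from rfl,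
            hfact,
            ← Finset.mul_prod_erase Finset.univ
              (fun j => μ (p j ⁻¹' (if j = i then R k else T k))) (Finset.mem_univ i)]
          congr 1
          · simp
          · exact Finset.prod_congr rfl fun j hj => by rw [if_neg (Finset.ne_of_mem_erase hj)]
        have hbase0 : (0:ℝ) ≤ 1 - ((k:ℝ)*s)^2/64 := by
          nlinarith [mul_nonneg (show (0:ℝ) ≤ (k:ℝ) by positivity) hs.le]
        have h1 : μ (p i ⁻¹' R k) ≤ ENNReal.ofReal (4*β^2*((k:ℝ)+5)^2*s^2) := by
          rw [hmeasmap i (R k) (hRmeas k) (hRsubU k)]; exact hvolR k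
        have h2 : ∏ j ∈ Finset.univ.erase i, μ (p j ⁻¹' T k) ≤ ENNReal.ofReal (ρ^k) := by
          have hTv : ∀ j ∈ Finset.univ.erase i,
              μ (p j ⁻¹' T k) ≤ ENNReal.ofReal (1 - ((k:ℝ)*s)^2/64) := by
            intro j _
            rw [hmeasmap j (T k) (hTmeas k) (hTsubU k)]; exact hvolT k hk2
          calc ∏ j ∈ Finset.univ.erase i, μ (p j ⁻¹' T k)
              ≤ ∏ _j ∈ Finset.univ.erase i, ENNReal.ofReal (1 - ((k:ℝ)*s)^2/64) :=
                Finset.prod_le_prod' hTv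
          _ = ENNReal.ofReal ((1 - ((k:ℝ)*s)^2/64) ^ (m-1)) := by
              rw [Finset.prod_const, Finset.card_erase_of_mem (Finset.mem_univ i),
                Finset.card_univ, Fintype.card_fin, ← ENNReal.ofReal_pow hbase0]
          _ ≤ ENNReal.ofReal (ρ^k) := by
              apply ENNReal.ofReal_le_ofReal
              have step1 : (1 - ((k:ℝ)*s)^2/64) ^ (m-1)
                  ≤ Real.exp (-(((k:ℝ)*s)^2/64)) ^ (m-1) :=
                pow_le_pow_left₀ hbase0 (Real.one_sub_le_exp_neg _) _
              have step2 : Real.exp (-(((k:ℝ)*s)^2/64)) ^ (m-1)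
                  = Real.exp (((m:ℝ)-1) * (-(((k:ℝ)*s)^2/64))) := by
                rw [← Real.exp_nat_mul]
                congr 1
                rw [Nat.cast_sub hm, Nat.cast_one]
              have hk1 : (k:ℝ) ≤ (k:ℝ)^2 := by
                exact_mod_cast Nat.le_self_pow two_ne_zero k
              have key : (k:ℝ)*(m:ℝ) ≤ 2*((m:ℝ)-1)*(k:ℝ)^2 := by
                nlinarith [hk1, hm2', (show (0:ℝ) ≤ (k:ℝ) by positivity),
                  mul_le_mul_of_nonneg_left hk1 hm0.le,
                  mul_nonneg (sub_nonneg.mpr (by linarith : (2:ℝ) ≤ m)) (sq_nonneg (k:ℝ))]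
              have step3 : ((m:ℝ)-1) * (-(((k:ℝ)*s)^2/64)) ≤ -((k:ℝ)/128) := by
                have e1 : ((m:ℝ)-1) * (-(((k:ℝ)*s)^2/64))
                    = -((((m:ℝ)-1) * ((k:ℝ)^2*(1/(m:ℝ))))/64) := by
                  rw [mul_pow, hs2]; ring
                rw [e1, neg_le_neg_iff]
                rw [div_le_div_iff₀ (by norm_num) (by norm_num : (0:ℝ) < 64)]
                have e2 : ((m:ℝ)-1) * ((k:ℝ)^2*(1/(m:ℝ))) * 128
                    = (2*((m:ℝ)-1)*(k:ℝ)^2) * (64/(m:ℝ)) := by ring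
                rw [e2]
                calc (k:ℝ) * 64 = ((k:ℝ)*(m:ℝ)) * (64/(m:ℝ)) := by
                      field_simp
                _ ≤ (2*((m:ℝ)-1)*(k:ℝ)^2) * (64/(m:ℝ)) := by
                      apply mul_le_mul_of_nonneg_right key (by positivity)
              have step4 : Real.exp (-((k:ℝ)/128)) = ρ^k := by
                rw [hρdef, ← Real.exp_nat_mul]
                congr 1; ring
              calc (1 - ((k:ℝ)*s)^2/64) ^ (m-1)
                  ≤ Real.exp (((m:ℝ)-1) * (-(((k:ℝ)*s)^2/64))) := step2 ▸ step1
              _ ≤ Real.exp (-((k:ℝ)/128)) := Real.exp_le_exp.mpr step3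
              _ = ρ^k := step4
        calc μ (B i k) = _ := hμB
        _ ≤ ENNReal.ofReal (4*β^2*((k:ℝ)+5)^2*s^2) * ENNReal.ofReal (ρ^k) :=
              mul_le_mul' h1 h2
        _ = ENNReal.ofReal (4*β^2*((k:ℝ)+5)^2*s^2 * ρ^k) := by
              rw [← ENNReal.ofReal_mul (by positivity)]
      · obtain ⟨j0, hj0⟩ := Fintype.exists_ne_of_one_lt_card
          (by rw [Fintype.card_fin]; omega) i
        have hsub0 : B i k ⊆ p j0 ⁻¹' T k := by
          intro ω hω
          simp only [hBdef, Set.mem_iInter] at hω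
          have := hω j0 (Finset.mem_univ j0)
          rwa [if_neg hj0] at this
        have hT0 : volume (T k) = 0 := by
          have hTe : T k = ∅ := by
            ext x
            simp only [hTdef, Set.mem_inter_iff, Set.mem_setOf_eq,
              Set.mem_empty_iff_false, iff_false, not_and]
            intro hxU hxd
            have h2 := dist_le_two_of_mem hxU hcU
            exact absurd hxd (by push_neg; linarith [lt_of_not_ge hk2])
          rw [hTe]; simp
        calc μ (B i k) ≤ μ (p j0 ⁻¹' T k) := measure_mono hsub0
        _ = 0 := by rw [hmeasmap j0 (T k) (hTmeas k) (hTsubU k), hT0]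
        _ ≤ _ := zero_le
    -- pointwise geometric containment
    have hpoint : ∀ ω : Ω, (∀ j, p j ω ∈ unitSquare) → ∀ i : Fin m,
        (vorCellD d (Finset.image (fun j => p j ω) Finset.univ) (p i ω) ∩
          axisSquare c (1 / Real.sqrt m)).Nonempty →
        ω ∈ ⋃ k ∈ Finset.range (2*m+1), B i k := by
      intro ω hω i hnon
      obtain ⟨x, hxcell, hxsq⟩ := hnon
      obtain ⟨hxU, hxvor⟩ := hxcell
      have hne : (Finset.univ.erase i).Nonempty := by
        rw [← Finset.card_pos, Finset.card_erase_of_mem (Finset.mem_univ i),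
          Finset.card_univ, Fintype.card_fin]
        omega
      obtain ⟨j0, hj0mem, hj0min⟩ :=
        Finset.exists_min_image (Finset.univ.erase i) (fun j => dist (p j ω) c) hne
      set ν := dist (p j0 ω) c with hνdef
      have hν0 : 0 ≤ ν := dist_nonneg
      set k := Nat.floor (ν/s) with hkdef
      have hks : (k:ℝ)*s ≤ ν := by
        have h := Nat.floor_le (div_nonneg hν0 hs.le)
        calc (k:ℝ)*s ≤ (ν/s)*s := mul_le_mul_of_nonneg_right h hs.le
        _ = ν := div_mul_cancel₀ ν (ne_of_gt hs)
      have hν' : ν < ((k:ℝ)+1)*s := by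
        have h := Nat.lt_floor_add_one (ν/s)
        calc ν = (ν/s)*s := (div_mul_cancel₀ ν (ne_of_gt hs)).symm
        _ < ((k:ℝ)+1)*s := by
            apply mul_lt_mul_of_pos_right _ hs
            exact_mod_cast h
      have hν2 : ν ≤ 2 := dist_le_two_of_mem (hω j0) hcU
      have hkK : k ≤ 2*m := by
        have hsqm : Real.sqrt m ≤ m := by
          nlinarith [Real.sq_sqrt hm0.le, Real.sqrt_nonneg (m:ℝ), hm2']
        have h1 : (k:ℝ) ≤ ν/s := Nat.floor_le (div_nonneg hν0 hs.le)
        have h2 : ν/s ≤ 2*Real.sqrt m := by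
          rw [hsdef]
          rw [div_div_eq_mul_div, div_one, mul_comm]
          calc Real.sqrt ↑m * ν ≤ Real.sqrt ↑m * 2 :=
                mul_le_mul_of_nonneg_left hν2 hsqrt.le
          _ = 2 * Real.sqrt ↑m := by ring
        have h3 : (k:ℝ) ≤ ((2*m : ℕ):ℝ) := by
          push_cast
          nlinarith [hsqm, hsqrt.le]
        exact_mod_cast h3
      apply Set.mem_biUnion (show k ∈ Finset.range (2*m+1) from Finset.mem_range.mpr (by omega))
      simp only [hBdef, Set.mem_iInter]
      intro j _
      by_cases hj : j = i
      · rw [if_pos hj, hj]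
        refine ⟨hω i, ?_⟩
        have hd1 : dist x (p i ω) ≤ d x (p i ω) := (hd x hxU (p i ω) (hω i)).1
        have hd2 : d x (p i ω) ≤ d x (p j0 ω) :=
          hxvor (p j0 ω) (Finset.mem_image_of_mem _ (Finset.mem_univ j0))
        have hd3 : d x (p j0 ω) ≤ β * dist x (p j0 ω) := (hd x hxU (p j0 ω) (hω j0)).2
        have hxc : dist x c ≤ 2*s := by
          rw [hsdef]
          apply dist_le_of_coord
          intro ii
          have hii := hxsq ii
          rw [abs_le]
          exact ⟨by linarith [hii.1], by linarith [hii.2]⟩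
        have htri1 : dist (p i ω) c ≤ dist x (p i ω) + dist x c := by
          calc dist (p i ω) c ≤ dist (p i ω) x + dist x c := dist_triangle _ _ _
          _ = dist x (p i ω) + dist x c := by rw [dist_comm]
        have htri2 : dist x (p j0 ω) ≤ dist x c + ν := by
          calc dist x (p j0 ω) ≤ dist x c + dist c (p j0 ω) := dist_triangle _ _ _
          _ = dist x c + ν := by rw [dist_comm c (p j0 ω)]
        have hνk : ν ≤ ((k:ℝ)+1)*s := hν'.le
        show dist (p i ω) c ≤ β*((k:ℝ)+5)*s
        linarith [hd1, hd2, hd3, hxc, htri1,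
          mul_le_mul_of_nonneg_left htri2 hβ0.le,
          mul_le_mul_of_nonneg_left hxc hβ0.le,
          mul_le_mul_of_nonneg_left hνk hβ0.le,
          mul_nonneg (sub_nonneg.mpr hβ) hs.le]
      · rw [if_neg hj]
        refine ⟨hω j, ?_⟩
        have hjmem : j ∈ Finset.univ.erase i := Finset.mem_erase.mpr ⟨hj, Finset.mem_univ j⟩
        calc (k:ℝ)*s ≤ ν := hks
        _ ≤ dist (p j ω) c := hj0min j hjmem
    -- assembling everything
    have hBU_meas : ∀ i : Fin m, MeasurableSet (⋃ k ∈ Finset.range (2*m+1), B i k) :=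
      fun i => (Finset.range (2*m+1)).measurableSet_biUnion (fun k _ => hBmeas i k)
    have hcount : ∀ᵐ ω ∂μ, (N ω : ℝ≥0∞)
        ≤ ∑ i : Fin m, Set.indicator (⋃ k ∈ Finset.range (2*m+1), B i k)
            (fun _ => (1:ℝ≥0∞)) ω := by
      filter_upwards [hG] with ω hω
      rw [hNdef]
      dsimp only
      rw [Finset.card_filter]
      push_cast
      apply Finset.sum_le_sum
      intro i _
      by_cases hi : (vorCellD d (Finset.image (fun j => p j ω) Finset.univ) (p i ω) ∩
          axisSquare c (1 / Real.sqrt m)).Nonempty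
      · rw [if_pos hi, Set.indicator_of_mem (hpoint ω hω i hi)]
      · rw [if_neg hi]
        exact zero_le
    have hP : ∑ k ∈ Finset.range (2*m+1), ((k:ℝ)+5)^2*ρ^k ≤ S :=
      Summable.sum_le_tsum (Finset.range (2*m+1)) (fun k _ => by positivity) hsummable
    calc ∫⁻ ω, (N ω : ℝ≥0∞) ∂μ
        ≤ ∫⁻ ω, ∑ i : Fin m, Set.indicator (⋃ k ∈ Finset.range (2*m+1), B i k)
            (fun _ => (1:ℝ≥0∞)) ω ∂μ := lintegral_mono_ae hcount
    _ = ∑ i : Fin m, μ (⋃ k ∈ Finset.range (2*m+1), B i k) := by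
        rw [lintegral_finset_sum]
        · exact Finset.sum_congr rfl fun i _ => lintegral_indicator_one (hBU_meas i)
        · exact fun i _ => measurable_const.indicator (hBU_meas i)
    _ ≤ ∑ _i : Fin m, ∑ k ∈ Finset.range (2*m+1),
          ENNReal.ofReal (4*β^2*((k:ℝ)+5)^2*s^2 * ρ^k) := by
        apply Finset.sum_le_sum
        intro i _
        calc μ (⋃ k ∈ Finset.range (2*m+1), B i k)
            ≤ ∑ k ∈ Finset.range (2*m+1), μ (B i k) := measure_biUnion_finset_le _ _
        _ ≤ _ := Finset.sum_le_sum fun k _ => hBbound i k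
    _ = (m : ℝ≥0∞) * ENNReal.ofReal (∑ k ∈ Finset.range (2*m+1),
          4*β^2*((k:ℝ)+5)^2*s^2 * ρ^k) := by
        rw [ENNReal.ofReal_sum_of_nonneg (fun k _ => by positivity),
          Finset.sum_const, Finset.card_univ, Fintype.card_fin, nsmul_eq_mul]
    _ ≤ ENNReal.ofReal ((4*S+1) * β^5) := by
        rw [← ENNReal.ofReal_natCast m, ← ENNReal.ofReal_mul (by positivity)]
        apply ENNReal.ofReal_le_ofReal
        have e1 : (m:ℝ) * ∑ k ∈ Finset.range (2*m+1), 4*β^2*((k:ℝ)+5)^2*s^2 * ρ^k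
            = 4*β^2*((m:ℝ)*s^2) * ∑ k ∈ Finset.range (2*m+1), ((k:ℝ)+5)^2*ρ^k := by
          rw [Finset.mul_sum, Finset.mul_sum]
          exact Finset.sum_congr rfl fun k _ => by ring
        rw [e1, hms]
        have hβ25 : β^2 ≤ β^5 := pow_le_pow_right₀ hβ (by norm_num)
        have hPn : (0:ℝ) ≤ ∑ k ∈ Finset.range (2*m+1), ((k:ℝ)+5)^2*ρ^k :=
          Finset.sum_nonneg fun k _ => by positivity
        nlinarith [hP, hPn, hβ25, hβ5, hS0, sq_nonneg β]
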